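/- Let K ≥ 1 be an integer, P > 0, and let h_1 ≥ h_2 ≥ ... ≥ h_K > 0 be channel gains. For a power vector p ∈ ℝ^K with p_k ≥ 0 and Σ_{k=1}^K p_k ≤ P, define R_k(p) = log((1 + h_k Σ_{j=1}^{k} p_j)/(1 + h_k Σ_{j=1}^{k-1} p_j)). Let θ_J ≥ 0 be a weight for each nonempty subset J ⊆ {1,...,K}, and let Γ be the set of all vectors r = (r_J)_{J nonempty, J ⊆ {1,...,K}} with r_J ≥ 0 for which there exists such a p with Σ_{J : max J = k} r_J ≤ R_k(p) for every k = 1,...,K. Then sup_{r ∈ Γ} Σ_J θ_J r_J = sup { Σ_{k=1}^K θ̃_k R_k(p) : p ∈ ℝ^K, p ≥ 0, Σ_k p_k ≤ P }, where θ̃_k = max { θ_J : J ⊆ {1,...,K}, max J = k }. -/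

import Mathlib

open Finset

private lemma group_sum_aux {K : ℕ} (hK : 1 ≤ K) (f : Finset (Fin K) → ℝ) :
    ∑ J ∈ univ.filter (fun J : Finset (Fin K) => J.Nonempty), f J
      = ∑ k : Fin K, ∑ J ∈ univ.filter
          (fun J : Finset (Fin K) => J.max = (k : WithBot (Fin K))), f J := by
  rw [← Finset.sum_fiberwise_of_maps_to
      (g := fun J : Finset (Fin K) => WithBot.unbotD ⟨0, hK⟩ (J.max))
      (t := (univ : Finset (Fin K)))
      (fun J _ => mem_univ _) f]
  refine Finset.sum_congr rfl fun k _ => Finset.sum_congr ?_ fun _ _ => rfl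
  ext J
  simp only [mem_filter, mem_univ, true_and, Finset.filter_filter]
  constructor
  · rintro ⟨hne, hg⟩
    obtain ⟨m, hm⟩ := Finset.max_of_nonempty hne
    rw [hm] at hg ⊢
    simpa using hg
  · intro hmax
    have hne : J.Nonempty := by
      rw [Finset.nonempty_iff_ne_empty]
      rintro rfl
      simp at hmax
    refine ⟨hne, ?_⟩
    rw [hmax]
    rfl

/-- Weighted-sum-rate reduction: maximizing `∑_J θ_J r_J` over the degraded
broadcast channel region `Γ` (rates indexed by nonempty subsets `J`, grouped by
`max J`) reduces to the `K`-variable power allocation problem with weights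
`θ̃_k = max {θ_J : max J = k}`. -/
theorem stmt0 (K : ℕ) (hK : 1 ≤ K) (P : ℝ) (hP : 0 < P)
    (h : Fin K → ℝ) (hh : ∀ k, 0 < h k)
    (hmono : ∀ j k : Fin K, j ≤ k → h k ≤ h j)
    (θ : Finset (Fin K) → ℝ) (hθ : ∀ J : Finset (Fin K), J.Nonempty → 0 ≤ θ J)
    (θt : Fin K → ℝ)
    (hθt : ∀ k : Fin K,
      IsGreatest {x : ℝ | ∃ J : Finset (Fin K),
        J.max = (k : WithBot (Fin K)) ∧ θ J = x} (θt k)) :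
    sSup ((fun r : Finset (Fin K) → ℝ =>
        ∑ J ∈ Finset.univ.filter (fun J : Finset (Fin K) => J.Nonempty),
          θ J * r J) ''
      {r | (∀ J : Finset (Fin K), J.Nonempty → 0 ≤ r J) ∧
        ∃ p : Fin K → ℝ, (∀ k, 0 ≤ p k) ∧ (∑ k, p k) ≤ P ∧
          ∀ k : Fin K,
            (∑ J ∈ Finset.univ.filter
                (fun J : Finset (Fin K) => J.max = (k : WithBot (Fin K))), r J)
              ≤ Real.log ((1 + h k * ∑ j ∈ Finset.univ.filter (· ≤ k), p j) /
                  (1 + h k * ∑ j ∈ Finset.univ.filter (· < k), p j))})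
    = sSup ((fun p : Fin K → ℝ =>
        ∑ k, θt k *
          Real.log ((1 + h k * ∑ j ∈ Finset.univ.filter (· ≤ k), p j) /
            (1 + h k * ∑ j ∈ Finset.univ.filter (· < k), p j))) ''
      {p | (∀ k, 0 ≤ p k) ∧ (∑ k, p k) ≤ P}) := by
  classical
  set R : (Fin K → ℝ) → Fin K → ℝ := fun p k =>
    Real.log ((1 + h k * ∑ j ∈ Finset.univ.filter (· ≤ k), p j) /
      (1 + h k * ∑ j ∈ Finset.univ.filter (· < k), p j)) with hRdef
  -- basic power-sum facts
  have hden : ∀ (p : Fin K → ℝ), (∀ k, 0 ≤ p k) → ∀ k : Fin K,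
      0 < 1 + h k * ∑ j ∈ univ.filter (· < k), p j := by
    intro p hp k
    have h1 : (0:ℝ) ≤ ∑ j ∈ univ.filter (· < k), p j :=
      Finset.sum_nonneg fun j _ => hp j
    nlinarith [hh k]
  have hnum : ∀ (p : Fin K → ℝ), (∀ k, 0 ≤ p k) → ∀ k : Fin K,
      1 + h k * ∑ j ∈ univ.filter (· < k), p j
        ≤ 1 + h k * ∑ j ∈ univ.filter (· ≤ k), p j := by
    intro p hp k
    have hsub : (univ.filter (· < k) : Finset (Fin K)) ⊆ univ.filter (· ≤ k) := by
      intro j hj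
      simp only [Finset.mem_filter, Finset.mem_univ, true_and] at hj ⊢
      exact le_of_lt hj
    have h1 : ∑ j ∈ univ.filter (· < k), p j ≤ ∑ j ∈ univ.filter (· ≤ k), p j :=
      Finset.sum_le_sum_of_subset_of_nonneg hsub (fun j _ _ => hp j)
    nlinarith [hh k]
  have hRnonneg : ∀ (p : Fin K → ℝ), (∀ k, 0 ≤ p k) → ∀ k : Fin K, 0 ≤ R p k := by
    intro p hp k
    apply Real.log_nonneg
    rw [le_div_iff₀ (hden p hp k)]
    simpa using hnum p hp k
  have hRle : ∀ (p : Fin K → ℝ), (∀ k, 0 ≤ p k) → (∑ k, p k) ≤ P →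
      ∀ k : Fin K, R p k ≤ Real.log (1 + h k * P) := by
    intro p hp hpP k
    have hle : ∑ j ∈ univ.filter (· ≤ k), p j ≤ P := by
      refine le_trans ?_ hpP
      exact Finset.sum_le_sum_of_subset_of_nonneg (Finset.filter_subset _ _)
        (fun j _ _ => hp j)
    have hd := hden p hp k
    have hn : (0:ℝ) < 1 + h k * ∑ j ∈ univ.filter (· ≤ k), p j :=
      lt_of_lt_of_le hd (hnum p hp k)
    have hdiv : (1 + h k * ∑ j ∈ univ.filter (· ≤ k), p j) /
        (1 + h k * ∑ j ∈ univ.filter (· < k), p j)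
          ≤ 1 + h k * P := by
      refine le_trans (div_le_self hn.le ?_) ?_
      · nlinarith [Finset.sum_nonneg (fun j (_ : j ∈ univ.filter (· < k)) => hp j),
          hh k]
      · nlinarith [hh k]
    exact Real.log_le_log (div_pos hn hd) hdiv
  have hθt0 : ∀ k : Fin K, 0 ≤ θt k := by
    intro k
    obtain ⟨J, hJmax, hJval⟩ := (hθt k).1
    have hne : J.Nonempty := by
      rw [Finset.nonempty_iff_ne_empty]; rintro rfl; simp at hJmax
    rw [← hJval]; exact hθ J hne
  set M : ℝ := ∑ k : Fin K, θt k * Real.log (1 + h k * P) with hMdef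
  -- key pointwise bound
  have key1 : ∀ (r : Finset (Fin K) → ℝ) (p : Fin K → ℝ),
      (∀ J : Finset (Fin K), J.Nonempty → 0 ≤ r J) → (∀ k, 0 ≤ p k) →
      (∀ k : Fin K, (∑ J ∈ univ.filter
          (fun J : Finset (Fin K) => J.max = (k : WithBot (Fin K))), r J) ≤ R p k) →
      (∑ J ∈ univ.filter (fun J : Finset (Fin K) => J.Nonempty), θ J * r J)
        ≤ ∑ k : Fin K, θt k * R p k := by
    intro r p hr hp hc
    rw [group_sum_aux hK]
    refine Finset.sum_le_sum fun k _ => ?_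
    have step1 : ∑ J ∈ univ.filter
        (fun J : Finset (Fin K) => J.max = (k : WithBot (Fin K))), θ J * r J
          ≤ θt k * ∑ J ∈ univ.filter
        (fun J : Finset (Fin K) => J.max = (k : WithBot (Fin K))), r J := by
      rw [Finset.mul_sum]
      refine Finset.sum_le_sum fun J hJ => ?_
      rw [Finset.mem_filter] at hJ
      have hne : J.Nonempty := by
        rw [Finset.nonempty_iff_ne_empty]; rintro rfl; simp at hJ
      exact mul_le_mul_of_nonneg_right ((hθt k).2 ⟨J, hJ.2, rfl⟩) (hr J hne)
    exact le_trans step1 (mul_le_mul_of_nonneg_left (hc k) (hθt0 k))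
  have key2 : ∀ (p : Fin K → ℝ), (∀ k, 0 ≤ p k) → (∑ k, p k) ≤ P →
      (∑ k : Fin K, θt k * R p k) ≤ M := by
    intro p hp hpP
    exact Finset.sum_le_sum fun k _ =>
      mul_le_mul_of_nonneg_left (hRle p hp hpP k) (hθt0 k)
  -- B ⊆ A
  choose Jc hJcmax hJcval using fun k => (hθt k).1
  have hBsubA : ∀ (p : Fin K → ℝ), (∀ k, 0 ≤ p k) → (∑ k, p k) ≤ P →
      ∃ r : Finset (Fin K) → ℝ,
        (∀ J : Finset (Fin K), J.Nonempty → 0 ≤ r J) ∧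
        (∀ k : Fin K, (∑ J ∈ univ.filter
            (fun J : Finset (Fin K) => J.max = (k : WithBot (Fin K))), r J)
              ≤ R p k) ∧
        (∑ J ∈ univ.filter (fun J : Finset (Fin K) => J.Nonempty), θ J * r J)
          = ∑ k : Fin K, θt k * R p k := by
    intro p hp hpP
    refine ⟨fun J => ∑ k : Fin K, if Jc k = J then R p k else 0, ?_, ?_, ?_⟩
    · intro J _
      exact Finset.sum_nonneg fun k _ => by
        split <;> [exact hRnonneg p hp k; exact le_refl 0]
    · intro k
      rw [Finset.sum_comm]
      have : ∀ k' : Fin K, (∑ J ∈ univ.filter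
          (fun J : Finset (Fin K) => J.max = (k : WithBot (Fin K))),
            if Jc k' = J then R p k' else 0)
          = if k' = k then R p k' else 0 := by
        intro k'
        rw [Finset.sum_ite_eq]
        congr 1
        simp only [Finset.mem_filter, Finset.mem_univ, true_and, hJcmax k',
          WithBot.coe_eq_coe]
      rw [Finset.sum_congr rfl fun k' _ => this k', Finset.sum_ite_eq' univ k]
      simp
    · have hrw : ∀ J : Finset (Fin K),
          θ J * (∑ k : Fin K, if Jc k = J then R p k else 0)
            = ∑ k : Fin K, if Jc k = J then θ J * R p k else 0 := by
        intro J
        rw [Finset.mul_sum]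
        exact Finset.sum_congr rfl fun k _ => by split <;> simp
      rw [Finset.sum_congr rfl fun J _ => hrw J, Finset.sum_comm]
      refine Finset.sum_congr rfl fun k _ => ?_
      rw [Finset.sum_ite_eq]
      have hmem : Jc k ∈ univ.filter (fun J : Finset (Fin K) => J.Nonempty) := by
        simp only [Finset.mem_filter, Finset.mem_univ, true_and]
        rw [Finset.nonempty_iff_ne_empty]
        intro hempty
        have := hJcmax k
        rw [hempty] at this
        simp at this
      rw [if_pos hmem, hJcval k]
  -- nonemptiness witnesses
  have hAmem : (0:ℝ) ∈ ((fun r : Finset (Fin K) → ℝ =>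
      ∑ J ∈ univ.filter (fun J : Finset (Fin K) => J.Nonempty), θ J * r J) ''
      {r | (∀ J : Finset (Fin K), J.Nonempty → 0 ≤ r J) ∧
        ∃ p : Fin K → ℝ, (∀ k, 0 ≤ p k) ∧ (∑ k, p k) ≤ P ∧
          ∀ k : Fin K, (∑ J ∈ univ.filter
              (fun J : Finset (Fin K) => J.max = (k : WithBot (Fin K))), r J)
            ≤ R p k}) := by
    refine ⟨fun _ => 0, ⟨fun J _ => le_refl 0, fun _ => 0, fun _ => le_refl 0,
      by simp [hP.le], fun k => ?_⟩, by simp⟩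
    simp only [Finset.sum_const_zero]
    exact hRnonneg (fun _ => 0) (fun _ => le_refl 0) k
  -- bounded above
  have hAbdd : ∀ x ∈ ((fun r : Finset (Fin K) → ℝ =>
      ∑ J ∈ univ.filter (fun J : Finset (Fin K) => J.Nonempty), θ J * r J) ''
      {r | (∀ J : Finset (Fin K), J.Nonempty → 0 ≤ r J) ∧
        ∃ p : Fin K → ℝ, (∀ k, 0 ≤ p k) ∧ (∑ k, p k) ≤ P ∧
          ∀ k : Fin K, (∑ J ∈ univ.filter
              (fun J : Finset (Fin K) => J.max = (k : WithBot (Fin K))), r J)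
            ≤ R p k}), x ≤ M := by
    rintro x ⟨r, ⟨hr, p, hp, hpP, hc⟩, rfl⟩
    exact le_trans (key1 r p hr hp hc) (key2 p hp hpP)
  have hBbdd : ∀ x ∈ ((fun p : Fin K → ℝ => ∑ k : Fin K, θt k * R p k) ''
      {p | (∀ k, 0 ≤ p k) ∧ (∑ k, p k) ≤ P}), x ≤ M := by
    rintro x ⟨p, ⟨hp, hpP⟩, rfl⟩
    exact key2 p hp hpP
  -- conclude
  refine le_antisymm ?_ ?_
  · refine csSup_le ⟨0, hAmem⟩ ?_
    rintro x ⟨r, ⟨hr, p, hp, hpP, hc⟩, rfl⟩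
    refine le_trans (key1 r p hr hp hc) (le_csSup ⟨M, ?_⟩ ⟨p, ⟨hp, hpP⟩, rfl⟩)
    rintro x ⟨q, ⟨hq, hqP⟩, rfl⟩
    exact key2 q hq hqP
  · refine csSup_le ⟨∑ k : Fin K, θt k * R (fun _ => 0) k,
      (fun _ => 0), ⟨fun _ => le_refl 0, by simp [hP.le]⟩, rfl⟩ ?_
    rintro x ⟨p, ⟨hp, hpP⟩, rfl⟩
    obtain ⟨r, hr, hc, hval⟩ := hBsubA p hp hpP
    dsimp only
    rw [← hval]
    exact le_csSup ⟨M, hAbdd⟩ ⟨r, ⟨hr, p, hp, hpP, hc⟩, rfl⟩
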